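/- arXiv:0804.4666 — 6 statements merged into one kernel-verified Lean document; each statement's English description precedes it below -/
import Mathlib

section
/- Let G = (A, B, E) be a bipartite simple graph with |A| = n, left degree d, which is a (k,ε)-unbalanced expander: every set X ⊆ A with |X| ≤ k satisfies |N(X)| ≥ (1−ε)·d·|X|. Order the edges lexicographically, and say an edge e_t = (i_t, j_t) causes a collision if some earlier edge e_s = (i_s, j_s), s < t, has j_s = j_t; let E″ be the set of edges causing collisions. Then for any k-sparse vector x ∈ ℝ^n (with coordinates ordered so that |x_1| ≥ … ≥ |x_n|), Σ_{(i,j)∈E″} |x_i| ≤ ε·d·‖x‖₁. -/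
open scoped Classical

private lemma stmt3_card_val_lt (n r : ℕ) (hr : r ≤ n) :
    (Finset.univ.filter fun i : Fin n => (i : ℕ) < r).card = r := by
  have himg : (Finset.univ.filter fun i : Fin n => (i : ℕ) < r).image Fin.val
      = Finset.range r := by
    ext s
    simp only [Finset.mem_image, Finset.mem_filter, Finset.mem_univ, true_and, Finset.mem_range]
    constructor
    · rintro ⟨i, hi, rfl⟩; exact hi
    · intro hs; exact ⟨⟨s, lt_of_lt_of_le hs hr⟩, hs, rfl⟩
  rw [← Finset.card_image_of_injective _ Fin.val_injective, himg, Finset.card_range]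

private lemma stmt3_tele (F : ℕ → ℝ) : ∀ a b : ℕ, a ≤ b →
    ∑ r ∈ Finset.Ico a b, (F r - F (r + 1)) = F a - F b := by
  intro a b hab
  induction b with
  | zero =>
      have : a = 0 := Nat.le_zero.mp hab
      subst this; simp
  | succ b ih =>
      rcases Nat.lt_or_ge a (b + 1) with h | h
      · have hab' : a ≤ b := by omega
        rw [Finset.sum_Ico_succ_top hab', ih hab']; ring
      · have : a = b + 1 := le_antisymm hab h
        subst this; simp

/-- For a `(k,ε)`-unbalanced expander with left degree `d` and a `k`-sparse vector `x` whose
coordinates are sorted by decreasing magnitude, the sum of `|x_i|` over edges `(i,j)` that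
cause collisions (an earlier edge in lexicographic order shares the right endpoint `j`)
is at most `ε·d·‖x‖₁`. -/
theorem stmt3 (n m k d : ℕ) (ε : ℝ)
    (E : Finset (Fin n × Fin m))
    (hdeg : ∀ i : Fin n, (E.filter fun e => e.1 = i).card = d)
    (hexp : ∀ X : Finset (Fin n), X.card ≤ k →
      (1 - ε) * d * X.card ≤ (((E.filter fun e => e.1 ∈ X).image Prod.snd).card : ℝ))
    (x : Fin n → ℝ)
    (hsparse : (Finset.univ.filter fun i => x i ≠ 0).card ≤ k)
    (hsorted : ∀ i j : Fin n, i ≤ j → |x j| ≤ |x i|) :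
    ∑ e ∈ E.filter (fun e => ∃ i' : Fin n, i' < e.1 ∧ (i', e.2) ∈ E), |x e.1|
      ≤ ε * d * ∑ i, |x i| := by
  classical
  set C := E.filter (fun e => ∃ i' : Fin n, i' < e.1 ∧ (i', e.2) ∈ E) with hCdef
  -- x vanishes from index k on
  have hzero : ∀ i : Fin n, k ≤ (i : ℕ) → x i = 0 := by
    intro i hi
    by_contra hx
    have hsub : (Finset.univ.filter fun j : Fin n => (j : ℕ) < (i : ℕ) + 1)
        ⊆ Finset.univ.filter fun j => x j ≠ 0 := by
      intro j hj
      simp only [Finset.mem_filter, Finset.mem_univ, true_and] at hj ⊢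
      intro h0
      have hji : j ≤ i := by
        rw [Fin.le_def]; omega
      have h1 : |x i| ≤ |x j| := hsorted j i hji
      rw [h0, abs_zero] at h1
      exact hx (abs_eq_zero.mp (le_antisymm h1 (abs_nonneg _)))
    have hcard := Finset.card_le_card hsub
    rw [stmt3_card_val_lt n ((i : ℕ) + 1) i.isLt] at hcard
    omega
  -- the counting lemma: few collision edges among any prefix
  have hcount : ∀ r : ℕ, r ≤ min k n →
      ((C.filter fun e => ((e.1 : Fin n) : ℕ) < r).card : ℝ) ≤ ε * d * r := by
    intro r hr
    set X : Finset (Fin n) := Finset.univ.filter fun i : Fin n => (i : ℕ) < r with hX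
    have hXcard : X.card = r := stmt3_card_val_lt n r (le_trans hr (min_le_right _ _))
    set EX := E.filter fun e => e.1 ∈ X with hEX
    have hEXcard : EX.card = d * r := by
      rw [Finset.card_eq_sum_card_fiberwise (s := EX) (f := Prod.fst) (t := X)
        (fun e he => (Finset.mem_filter.mp he).2)]
      have hfib : ∀ i ∈ X, (EX.filter fun e => e.1 = i).card = d := by
        intro i hi
        rw [← hdeg i]
        congr 1
        ext e
        simp only [hEX, Finset.mem_filter]
        constructor
        · rintro ⟨⟨h1, _⟩, h3⟩; exact ⟨h1, h3⟩
        · rintro ⟨h1, h3⟩; exact ⟨⟨h1, h3 ▸ hi⟩, h3⟩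
      rw [Finset.sum_congr rfl hfib, Finset.sum_const, hXcard, smul_eq_mul, mul_comm]
    set NC := EX.filter (fun e => ¬ ∃ i' : Fin n, i' < e.1 ∧ (i', e.2) ∈ E) with hNC
    have himg : EX.image Prod.snd ⊆ NC.image Prod.snd := by
      intro j hj
      rw [Finset.mem_image] at hj
      obtain ⟨e, he, hej⟩ := hj
      obtain ⟨i0, hi0T, hi0min⟩ : ∃ i0 ∈ (EX.filter fun e' => e'.2 = j).image Prod.fst,
          ∀ i' ∈ (EX.filter fun e' => e'.2 = j).image Prod.fst, i0 ≤ i' := by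
        have hTne : ((EX.filter fun e' => e'.2 = j).image Prod.fst).Nonempty :=
          ⟨e.1, Finset.mem_image.mpr ⟨e, Finset.mem_filter.mpr ⟨he, hej⟩, rfl⟩⟩
        exact ⟨_, Finset.min'_mem _ hTne, fun i' h => Finset.min'_le _ _ h⟩
      rw [Finset.mem_image] at hi0T
      obtain ⟨e', he', hfst⟩ := hi0T
      rw [Finset.mem_filter] at he'
      have hmem : (i0, j) ∈ EX := by
        have : e' = (i0, j) := by
          rw [Prod.ext_iff]; exact ⟨hfst, he'.2⟩
        exact this ▸ he'.1
      refine Finset.mem_image.mpr ⟨(i0, j), ?_, rfl⟩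
      rw [hNC, Finset.mem_filter]
      refine ⟨hmem, ?_⟩
      rintro ⟨i', hi', hE'⟩
      have hi0X : i0 ∈ X := (Finset.mem_filter.mp hmem).2
      have hi0r : (i0 : ℕ) < r := (Finset.mem_filter.mp hi0X).2
      have hi'X : i' ∈ X := by
        rw [hX, Finset.mem_filter]
        exact ⟨Finset.mem_univ _, lt_trans hi' hi0r⟩
      have hi'T : i' ∈ (EX.filter fun e' => e'.2 = j).image Prod.fst := by
        rw [Finset.mem_image]
        exact ⟨(i', j), Finset.mem_filter.mpr ⟨Finset.mem_filter.mpr ⟨hE', hi'X⟩, rfl⟩, rfl⟩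
      exact absurd (hi0min i' hi'T) (not_le.mpr hi')
    have hNXcard : (1 - ε) * d * r ≤ (NC.card : ℝ) := by
      have h1 := hexp X (hXcard ▸ le_trans hr (min_le_left _ _))
      rw [hXcard] at h1
      have h2 : (EX.image Prod.snd).card ≤ NC.card :=
        le_trans (Finset.card_le_card himg) (Finset.card_image_le)
      calc (1 - ε) * d * r ≤ ((EX.image Prod.snd).card : ℝ) := h1
        _ ≤ (NC.card : ℝ) := by exact_mod_cast h2
    have hCX : C.filter (fun e => ((e.1 : Fin n) : ℕ) < r)
        = EX.filter (fun e => ∃ i' : Fin n, i' < e.1 ∧ (i', e.2) ∈ E) := by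
      ext e
      simp only [hCdef, hEX, hX, Finset.mem_filter, Finset.mem_univ, true_and]
      tauto
    have hsplit : (EX.filter (fun e => ∃ i' : Fin n, i' < e.1 ∧ (i', e.2) ∈ E)).card
        + NC.card = EX.card := by
      rw [hNC]
      exact Finset.card_filter_add_card_filter_not _
    rw [hCX]
    have hsplitR : ((EX.filter (fun e => ∃ i' : Fin n, i' < e.1 ∧ (i', e.2) ∈ E)).card : ℝ)
        + (NC.card : ℝ) = (d : ℝ) * r := by
      rw [← Nat.cast_add, hsplit, hEXcard]; push_cast; ring
    have hring : ε * d * r = (d : ℝ) * r - (1 - ε) * d * r := by ring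
    linarith
  -- the summation argument
  set N := min k n with hN
  have hNp : ∀ p, N ≤ p → p < n → k ≤ p := by
    intro p h1 h2
    rcases le_total k n with h | h
    · rw [hN, min_eq_left h] at h1; exact h1
    · rw [hN, min_eq_right h] at h1; omega
  set F : ℕ → ℝ := fun p => if h : p < n then |x ⟨p, h⟩| else 0 with hF
  have hFnn : ∀ p, 0 ≤ F p := by
    intro p; rw [hF]; dsimp only; split
    · exact abs_nonneg _
    · exact le_refl 0
  have hFmono : ∀ p, F (p + 1) ≤ F p := by
    intro p
    by_cases h : p + 1 < n
    · have hp : p < n := by omega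
      rw [hF]; dsimp only; rw [dif_pos h, dif_pos hp]
      exact hsorted ⟨p, hp⟩ ⟨p + 1, h⟩ (by simp [Fin.le_def])
    · have : F (p + 1) = 0 := by rw [hF]; dsimp only; rw [dif_neg h]
      rw [this]; exact hFnn p
  have hFk : ∀ p, k ≤ p → F p = 0 := by
    intro p hp; rw [hF]; dsimp only; split
    · next h => exact abs_eq_zero.mpr (hzero ⟨p, h⟩ hp)
    · rfl
  have hFN : F N = 0 := by
    by_cases h : N < n
    · exact hFk N (hNp N le_rfl h)
    · rw [hF]; dsimp only; rw [dif_neg h]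
  have hFi : ∀ i : Fin n, F (i : ℕ) = |x i| := by
    intro i; rw [hF]; dsimp only; rw [dif_pos i.isLt]
  have hkey : ∀ p, p < N →
      F p = ∑ r ∈ Finset.range N, (if p ≤ r then F r - F (r + 1) else 0) := by
    intro p hp
    rw [← Finset.sum_filter]
    have hfi : (Finset.range N).filter (fun r => p ≤ r) = Finset.Ico p N := by
      ext r
      simp only [Finset.mem_filter, Finset.mem_range, Finset.mem_Ico]
      omega
    rw [hfi, stmt3_tele F p N (le_of_lt hp), hFN, sub_zero]
  calc ∑ e ∈ C, |x e.1|
      = ∑ e ∈ C, F ((e.1 : Fin n) : ℕ) := by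
        refine Finset.sum_congr rfl fun e _ => ?_
        rw [hFi]
    _ = ∑ e ∈ C.filter (fun e => ((e.1 : Fin n) : ℕ) < N), F ((e.1 : Fin n) : ℕ) := by
        symm
        apply Finset.sum_filter_of_ne
        intro e _ hne
        by_contra h
        push_neg at h
        have hlt : ((e.1 : Fin n) : ℕ) < n := e.1.isLt
        exact hne (hFk _ (hNp _ (by omega) hlt))
    _ = ∑ e ∈ C.filter (fun e => ((e.1 : Fin n) : ℕ) < N),
          ∑ r ∈ Finset.range N, (if ((e.1 : Fin n) : ℕ) ≤ r then F r - F (r + 1) else 0) := by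
        refine Finset.sum_congr rfl fun e he => hkey _ (Finset.mem_filter.mp he).2
    _ = ∑ r ∈ Finset.range N, ∑ e ∈ C.filter (fun e => ((e.1 : Fin n) : ℕ) < N),
          (if ((e.1 : Fin n) : ℕ) ≤ r then F r - F (r + 1) else 0) := Finset.sum_comm
    _ = ∑ r ∈ Finset.range N,
          ((C.filter fun e => ((e.1 : Fin n) : ℕ) < r + 1).card : ℝ) * (F r - F (r + 1)) := by
        refine Finset.sum_congr rfl fun r hr => ?_
        rw [Finset.mem_range] at hr
        have hfe : (C.filter (fun e => ((e.1 : Fin n) : ℕ) < N)).filter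
            (fun e => ((e.1 : Fin n) : ℕ) ≤ r)
            = C.filter (fun e => ((e.1 : Fin n) : ℕ) < r + 1) := by
          rw [Finset.filter_filter]
          ext e
          simp only [Finset.mem_filter]
          constructor
          · rintro ⟨h1, _, h3⟩; exact ⟨h1, Nat.lt_succ_iff.mpr h3⟩
          · rintro ⟨h1, h2⟩
            exact ⟨h1, lt_of_le_of_lt (Nat.lt_succ_iff.mp h2) hr, Nat.lt_succ_iff.mp h2⟩
        rw [← Finset.sum_filter, hfe, Finset.sum_const, nsmul_eq_mul]
    _ ≤ ∑ r ∈ Finset.range N, (ε * d * ((r : ℝ) + 1)) * (F r - F (r + 1)) := by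
        refine Finset.sum_le_sum fun r hr => ?_
        rw [Finset.mem_range] at hr
        have h1 := hcount (r + 1) (by omega)
        push_cast at h1
        exact mul_le_mul_of_nonneg_right h1 (sub_nonneg.mpr (hFmono r))
    _ = ε * d * ∑ r ∈ Finset.range N, ((r : ℝ) + 1) * (F r - F (r + 1)) := by
        rw [Finset.mul_sum]
        refine Finset.sum_congr rfl fun r _ => by ring
    _ = ε * d * ∑ p ∈ Finset.range N, F p := by
        congr 1
        calc ∑ r ∈ Finset.range N, ((r : ℝ) + 1) * (F r - F (r + 1))
            = ∑ r ∈ Finset.range N, ∑ p ∈ Finset.range N,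
                (if p ≤ r then F r - F (r + 1) else 0) := by
              refine Finset.sum_congr rfl fun r hr => ?_
              rw [Finset.mem_range] at hr
              rw [← Finset.sum_filter, Finset.sum_const, nsmul_eq_mul]
              have hcardeq : ((Finset.range N).filter fun p => p ≤ r) = Finset.range (r + 1) := by
                ext p
                simp only [Finset.mem_filter, Finset.mem_range]
                omega
              rw [hcardeq, Finset.card_range]
              push_cast; ring
          _ = ∑ p ∈ Finset.range N, ∑ r ∈ Finset.range N,
                (if p ≤ r then F r - F (r + 1) else 0) := Finset.sum_comm
          _ = ∑ p ∈ Finset.range N, F p := by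
              refine Finset.sum_congr rfl fun p hp => ?_
              rw [Finset.mem_range] at hp
              exact (hkey p hp).symm
    _ = ε * d * ∑ i, |x i| := by
        congr 1
        have h1 : ∑ p ∈ Finset.range N, F p = ∑ p ∈ Finset.range n, F p :=
          Finset.sum_subset (Finset.range_subset_range.mpr (min_le_right k n))
            (fun p hpn hpN => by
              simp only [Finset.mem_range, not_lt] at hpn hpN
              exact hFk p (hNp p hpN hpn))
        rw [h1, ← Fin.sum_univ_eq_sum_range (fun p => F p) n]
        exact Finset.sum_congr rfl fun i _ => hFi i
end

section
/- Let Φ be the m×n adjacency matrix of a (k,ε)-unbalanced expander with left degree d. Then for every k-sparse vector x ∈ ℝ^n, ‖Φx‖₁ ≥ (1−2ε)·d·‖x‖₁. -/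
open scoped Classical
set_option maxHeartbeats 1000000

/-- Abel-summation-type lemma: if partial sums of `c` over downward-closed subsets
(w.r.t. a ranking `ρ` injective on `T`) are bounded by `K * card`, and `aa` is a
nonnegative function antitone w.r.t. `ρ`, then `∑ c * aa ≤ K * ∑ aa`. -/
lemma stmt4_abel {ι : Type*} (ρ : ι → ℕ) (K : ℝ) (c : ι → ℝ)
    (T : Finset ι) :
    ∀ aa : ι → ℝ,
    (∀ i ∈ T, ∀ i' ∈ T, ρ i = ρ i' → i = i') →
    (∀ i ∈ T, 0 ≤ aa i) →
    (∀ i ∈ T, ∀ i' ∈ T, ρ i ≤ ρ i' → aa i' ≤ aa i) →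
    (∀ P ⊆ T, (∀ i ∈ P, ∀ i' ∈ T, ρ i' ≤ ρ i → i' ∈ P) →
      ∑ i ∈ P, c i ≤ K * P.card) →
    ∑ i ∈ T, c i * aa i ≤ K * ∑ i ∈ T, aa i := by
  classical
  induction T using Finset.strongInduction with
  | _ T ih =>
    intro aa hinj hnn hmono hcnt
    rcases T.eq_empty_or_nonempty with rfl | hne
    · simp
    obtain ⟨i1, hi1T, hi1max⟩ := T.exists_max_image ρ hne
    have hb0 : 0 ≤ aa i1 := hnn i1 hi1T
    have hT'lt : T.erase i1 ⊂ T := Finset.erase_ssubset hi1T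
    have hsub : T.erase i1 ⊆ T := Finset.erase_subset _ _
    have IH : ∑ i ∈ T.erase i1, c i * (aa i - aa i1)
        ≤ K * ∑ i ∈ T.erase i1, (aa i - aa i1) := by
      refine ih (T.erase i1) hT'lt (fun i => aa i - aa i1) ?_ ?_ ?_ ?_
      · intro i hi i' hi' h; exact hinj i (hsub hi) i' (hsub hi') h
      · intro i hi
        have := hmono i (hsub hi) i1 hi1T (hi1max i (hsub hi))
        linarith
      · intro i hi i' hi' h
        have := hmono i (hsub hi) i' (hsub hi') h
        linarith
      · intro P hP hdc
        refine hcnt P (hP.trans hsub) ?_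
        intro i hiP i' hi'T hle
        by_cases hi1 : i' = i1
        · subst hi1
          have h1 : ρ i ≤ ρ i' := hi1max i (hsub (hP hiP))
          have h2 : i = i' := hinj i (hsub (hP hiP)) i' hi'T (le_antisymm h1 hle)
          subst h2
          exact absurd (hP hiP) (Finset.notMem_erase _ _)
        · exact hdc i hiP i' (Finset.mem_erase.mpr ⟨hi1, hi'T⟩) hle
    have hsplit : ∑ i ∈ T, c i * aa i
        = (∑ i ∈ T, c i) * aa i1 + ∑ i ∈ T.erase i1, c i * (aa i - aa i1) := by
      have h0 : ∑ i ∈ T, c i * (aa i - aa i1)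
          = c i1 * (aa i1 - aa i1) + ∑ i ∈ T.erase i1, c i * (aa i - aa i1) :=
        (Finset.add_sum_erase T _ hi1T).symm
      calc ∑ i ∈ T, c i * aa i
          = ∑ i ∈ T, (c i * aa i1 + c i * (aa i - aa i1)) :=
            Finset.sum_congr rfl fun i _ => by ring
        _ = (∑ i ∈ T, c i * aa i1) + ∑ i ∈ T, c i * (aa i - aa i1) :=
            Finset.sum_add_distrib
        _ = (∑ i ∈ T, c i) * aa i1 + ∑ i ∈ T.erase i1, c i * (aa i - aa i1) := by
            rw [← Finset.sum_mul, h0]; ring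
    have h1 : (∑ i ∈ T, c i) * aa i1 ≤ K * T.card * aa i1 := by
      have := hcnt T (le_refl T) (fun i hi i' hi' _ => hi')
      exact mul_le_mul_of_nonneg_right this hb0
    have hcard : ((T.erase i1).card : ℝ) = (T.card : ℝ) - 1 := by
      have := Finset.card_erase_add_one hi1T
      have h2 : ((T.erase i1).card : ℝ) + 1 = (T.card : ℝ) := by exact_mod_cast this
      linarith
    have h2 : ∑ i ∈ T.erase i1, (aa i - aa i1)
        = (∑ i ∈ T, aa i) - (T.card : ℝ) * aa i1 := by
      rw [Finset.sum_sub_distrib, Finset.sum_const, nsmul_eq_mul,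
        ← Finset.add_sum_erase T aa hi1T, hcard]
      ring
    rw [hsplit]
    rw [h2] at IH
    nlinarith [IH, h1]

/-- If `Φ` is the adjacency matrix of a `(k,ε)`-unbalanced expander with left degree `d`,
then for every `k`-sparse `x`, `‖Φx‖₁ ≥ (1−2ε)·d·‖x‖₁`. -/
theorem stmt4 (n m k d : ℕ) (ε : ℝ)
    (E : Finset (Fin n × Fin m))
    (hdeg : ∀ i : Fin n, (E.filter fun e => e.1 = i).card = d)
    (hexp : ∀ X : Finset (Fin n), X.card ≤ k →
      (1 - ε) * d * X.card ≤ (((E.filter fun e => e.1 ∈ X).image Prod.snd).card : ℝ))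
    (Φ : Matrix (Fin m) (Fin n) ℝ)
    (hΦ : ∀ j i, Φ j i = if (i, j) ∈ E then 1 else 0)
    (x : Fin n → ℝ)
    (hsparse : (Finset.univ.filter fun i => x i ≠ 0).card ≤ k) :
    (1 - 2 * ε) * d * ∑ i, |x i| ≤ ∑ j, |Φ.mulVec x j| := by
  classical
  set S : Finset (Fin n) := Finset.univ.filter fun i => x i ≠ 0 with hSdef
  have hmemS : ∀ i, i ∈ S ↔ x i ≠ 0 := by intro i; simp [hSdef]
  have hScard : S.card ≤ k := hsparse
  -- a ranking making |x| antitone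
  obtain ⟨ρ, hρinj, hρmono⟩ : ∃ ρ : Fin n → ℕ, Function.Injective ρ ∧
      ∀ i i', ρ i ≤ ρ i' → |x i'| ≤ |x i| := by
    refine ⟨fun i => (((Tuple.sort fun r => -|x r|).symm i : Fin n) : ℕ),
      fun i i' h => Equiv.injective _ (Fin.val_injective h), ?_⟩
    intro i i' h
    have h2 := Tuple.monotone_sort (fun r => -|x r|) (show _ ≤ _ from Fin.le_def.mpr h)
    simp only [Function.comp_apply, Equiv.apply_symm_apply] at h2
    linarith
  set C : Finset (Fin n × Fin m) :=
    E.filter (fun e => e.1 ∈ S ∧ ∃ i', i' ∈ S ∧ (i', e.2) ∈ E ∧ ρ i' < ρ e.1) with hCdef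
  set G : Finset (Fin n × Fin m) :=
    E.filter (fun e => e.1 ∈ S ∧ ¬ ∃ i', i' ∈ S ∧ (i', e.2) ∈ E ∧ ρ i' < ρ e.1) with hGdef
  clear_value S C G
  -- minimal edges are good
  have hminG : ∀ (j : Fin m) (i0 : Fin n), i0 ∈ S → (i0, j) ∈ E →
      (∀ i ∈ S, (i, j) ∈ E → ρ i0 ≤ ρ i) → (i0, j) ∈ G := by
    intro j i0 h1 h2 h3
    rw [hGdef, Finset.mem_filter]
    refine ⟨h2, h1, ?_⟩
    rintro ⟨i', hi'S, hi'E, hlt⟩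
    exact absurd (h3 i' hi'S hi'E) (not_le.mpr hlt)
  -- good edges into the same right vertex coincide
  have hGuniq : ∀ e ∈ G, ∀ e' ∈ G, e.2 = e'.2 → e = e' := by
    intro e he e' he' hj
    rw [hGdef, Finset.mem_filter] at he he'
    obtain ⟨heE, heS, heNC⟩ := he
    obtain ⟨he'E, he'S, he'NC⟩ := he'
    rcases lt_trichotomy (ρ e.1) (ρ e'.1) with h | h | h
    · have hE2 : (e.1, e'.2) ∈ E := by rw [← hj]; simpa using heE
      exact absurd ⟨e.1, heS, hE2, h⟩ he'NC
    · exact Prod.ext (hρinj h) hj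
    · have hE2 : (e'.1, e.2) ∈ E := by rw [hj]; simpa using he'E
      exact absurd ⟨e'.1, he'S, hE2, h⟩ heNC
  -- G and C partition edges with source in the support
  have hdisj : Disjoint G C := by
    rw [Finset.disjoint_left]
    intro e heG heC
    rw [hGdef, Finset.mem_filter] at heG
    rw [hCdef, Finset.mem_filter] at heC
    exact heG.2.2 heC.2.2
  have hunion : G ∪ C = E.filter (fun e => e.1 ∈ S) := by
    ext e
    simp only [hGdef, hCdef, Finset.mem_union, Finset.mem_filter]
    tauto
  have hsum_union : (∑ e ∈ G, |x e.1|) + (∑ e ∈ C, |x e.1|)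
      = ∑ e ∈ E.filter (fun e => e.1 ∈ S), |x e.1| := by
    rw [← Finset.sum_union hdisj, hunion]
  have hfib : ∑ e ∈ E.filter (fun e => e.1 ∈ S), |x e.1| = (d : ℝ) * ∑ i ∈ S, |x i| := by
    rw [← Finset.sum_fiberwise_of_maps_to (g := Prod.fst)
      (fun e he => (Finset.mem_filter.mp he).2) (fun e => |x e.1|), Finset.mul_sum]
    refine Finset.sum_congr rfl fun i hiS => ?_
    have hfe : (E.filter (fun e => e.1 ∈ S)).filter (fun e => e.1 = i)
        = E.filter (fun e => e.1 = i) := by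
      ext e
      simp only [Finset.mem_filter, and_assoc]
      constructor
      · rintro ⟨h1, _, h3⟩; exact ⟨h1, h3⟩
      · rintro ⟨h1, h3⟩; exact ⟨h1, h3 ▸ hiS, h3⟩
    have hval : ∀ e ∈ E.filter (fun e => e.1 = i), |x e.1| = |x i| := by
      intro e he; rw [(Finset.mem_filter.mp he).2]
    rw [hfe, Finset.sum_congr rfl hval, Finset.sum_const, hdeg i, nsmul_eq_mul]
  -- express mulVec
  have hmul : ∀ j, Φ.mulVec x j = ∑ i ∈ S.filter (fun i => (i, j) ∈ E), x i := by
    intro j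
    have h1 : Φ.mulVec x j = ∑ i ∈ Finset.univ.filter (fun i => (i, j) ∈ E), x i := by
      simp only [Matrix.mulVec, dotProduct, hΦ, ite_mul, one_mul, zero_mul]
      rw [Finset.sum_filter]
    rw [h1]
    refine (Finset.sum_subset ?_ ?_).symm
    · intro i hi
      rw [Finset.mem_filter] at hi ⊢
      exact ⟨Finset.mem_univ i, hi.2⟩
    · intro i hi hni
      rw [Finset.mem_filter] at hi
      by_contra hxi
      exact hni (Finset.mem_filter.mpr ⟨(hmemS i).mpr hxi, hi.2⟩)
  -- per-column lower bound
  have stepA : ∀ j : Fin m,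
      (∑ e ∈ G.filter (fun e => e.2 = j), |x e.1|)
        - (∑ e ∈ C.filter (fun e => e.2 = j), |x e.1|) ≤ |Φ.mulVec x j| := by
    intro j
    rcases (S.filter (fun i => (i, j) ∈ E)).eq_empty_or_nonempty with hTe | hTne
    · have hGe : G.filter (fun e => e.2 = j) = ∅ := by
        rw [Finset.eq_empty_iff_forall_notMem]
        intro e he
        rw [Finset.mem_filter, hGdef, Finset.mem_filter] at he
        obtain ⟨⟨heE, heS, _⟩, hej⟩ := he
        have : e.1 ∈ S.filter (fun i => (i, j) ∈ E) :=
          Finset.mem_filter.mpr ⟨heS, by rw [← hej]; simpa using heE⟩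
        simp [hTe] at this
      have hCe : C.filter (fun e => e.2 = j) = ∅ := by
        rw [Finset.eq_empty_iff_forall_notMem]
        intro e he
        rw [Finset.mem_filter, hCdef, Finset.mem_filter] at he
        obtain ⟨⟨heE, heS, _⟩, hej⟩ := he
        have : e.1 ∈ S.filter (fun i => (i, j) ∈ E) :=
          Finset.mem_filter.mpr ⟨heS, by rw [← hej]; simpa using heE⟩
        simp [hTe] at this
      rw [hGe, hCe]
      simp [abs_nonneg]
    · obtain ⟨i0, hi0T, hi0min⟩ := Finset.exists_min_image _ ρ hTne
      have hi0S : i0 ∈ S := (Finset.mem_filter.mp hi0T).1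
      have hi0E : (i0, j) ∈ E := (Finset.mem_filter.mp hi0T).2
      have hi0G : (i0, j) ∈ G :=
        hminG j i0 hi0S hi0E (fun i hiS hiE => hi0min i (Finset.mem_filter.mpr ⟨hiS, hiE⟩))
      -- G fiber is the singleton (i0, j)
      have hGj : G.filter (fun e => e.2 = j) = {(i0, j)} := by
        ext e
        simp only [Finset.mem_filter, Finset.mem_singleton]
        constructor
        · rintro ⟨heG, hej⟩
          exact hGuniq e heG (i0, j) hi0G hej
        · rintro rfl
          exact ⟨hi0G, rfl⟩
      -- C fiber is the image of the rest of the column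
      have hCj : C.filter (fun e => e.2 = j)
          = ((S.filter (fun i => (i, j) ∈ E)).erase i0).image (fun i => (i, j)) := by
        ext e
        constructor
        · intro he
          obtain ⟨heC, hej⟩ := Finset.mem_filter.mp he
          rw [hCdef, Finset.mem_filter] at heC
          obtain ⟨heE, heS, i', hi'S, hi'E, hlt⟩ := heC
          have he1T : e.1 ∈ S.filter (fun i => (i, j) ∈ E) :=
            Finset.mem_filter.mpr ⟨heS, by rw [← hej]; simpa using heE⟩
          have hne : e.1 ≠ i0 := by
            intro h
            have hlt2 : ρ i' < ρ i0 := h ▸ hlt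
            have hi'T : i' ∈ S.filter (fun i => (i, j) ∈ E) :=
              Finset.mem_filter.mpr ⟨hi'S, by rw [← hej]; exact hi'E⟩
            exact absurd (hi0min i' hi'T) (not_le.mpr hlt2)
          rw [Finset.mem_image]
          exact ⟨e.1, Finset.mem_erase.mpr ⟨hne, he1T⟩, by rw [← hej]⟩
        · intro he
          obtain ⟨i, hi, hie⟩ := Finset.mem_image.mp he
          obtain ⟨hne, hiT⟩ := Finset.mem_erase.mp hi
          obtain ⟨hiS, hiE⟩ := Finset.mem_filter.mp hiT
          have hlt : ρ i0 < ρ i := by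
            rcases lt_or_eq_of_le (hi0min i hiT) with h | h
            · exact h
            · exact absurd (hρinj h.symm) hne
          subst hie
          refine Finset.mem_filter.mpr ⟨?_, rfl⟩
          rw [hCdef, Finset.mem_filter]
          exact ⟨hiE, hiS, i0, hi0S, hi0E, hlt⟩
      rw [hGj, hCj, Finset.sum_singleton]
      rw [Finset.sum_image (fun i _ i' _ h => (Prod.mk.injEq _ _ _ _ ▸ h).1)]
      rw [hmul j]
      have hsplit : ∑ i ∈ S.filter (fun i => (i, j) ∈ E), x i
          = x i0 + ∑ i ∈ (S.filter (fun i => (i, j) ∈ E)).erase i0, x i :=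
        (Finset.add_sum_erase _ x hi0T).symm
      have habs : |∑ i ∈ (S.filter (fun i => (i, j) ∈ E)).erase i0, x i|
          ≤ ∑ i ∈ (S.filter (fun i => (i, j) ∈ E)).erase i0, |x i| :=
        Finset.abs_sum_le_sum_abs x _
      have htri : |x i0| - |∑ i ∈ (S.filter (fun i => (i, j) ∈ E)).erase i0, x i|
          ≤ |∑ i ∈ S.filter (fun i => (i, j) ∈ E), x i| := by
        rw [hsplit]
        have := abs_add_le (x i0 + ∑ i ∈ (S.filter (fun i => (i, j) ∈ E)).erase i0, x i)
          (-(∑ i ∈ (S.filter (fun i => (i, j) ∈ E)).erase i0, x i))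
        simp only [add_neg_cancel_right, abs_neg] at this
        linarith
      linarith
  -- sum stepA over all columns
  have hA : (∑ e ∈ G, |x e.1|) - (∑ e ∈ C, |x e.1|) ≤ ∑ j, |Φ.mulVec x j| := by
    have h1 := Finset.sum_le_sum (fun j (_ : j ∈ Finset.univ) => stepA j)
    rw [Finset.sum_sub_distrib] at h1
    have hGf : ∑ j : Fin m, ∑ e ∈ G.filter (fun e => e.2 = j), |x e.1| = ∑ e ∈ G, |x e.1| :=
      Finset.sum_fiberwise_of_maps_to (g := Prod.snd) (fun e _ => Finset.mem_univ e.2)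
        (fun e => |x e.1|)
    have hCf : ∑ j : Fin m, ∑ e ∈ C.filter (fun e => e.2 = j), |x e.1| = ∑ e ∈ C, |x e.1| :=
      Finset.sum_fiberwise_of_maps_to (g := Prod.snd) (fun e _ => Finset.mem_univ e.2)
        (fun e => |x e.1|)
    rw [hGf, hCf] at h1
    exact h1
  -- counting collisions in downward-closed sets
  have hcount : ∀ P ⊆ S, (∀ i ∈ P, ∀ i' ∈ S, ρ i' ≤ ρ i → i' ∈ P) →
      ∑ i ∈ P, ((C.filter (fun e => e.1 = i)).card : ℝ) ≤ (ε * d) * P.card := by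
    intro P hPS hdc
    have hPk : P.card ≤ k := le_trans (Finset.card_le_card hPS) hScard
    -- sum of fibers equals card of CP
    have hCPcard : ∑ i ∈ P, ((C.filter (fun e => e.1 = i)).card : ℝ)
        = ((C.filter (fun e => e.1 ∈ P)).card : ℝ) := by
      rw [Finset.card_eq_sum_card_fiberwise (f := Prod.fst) (s := C.filter (fun e => e.1 ∈ P)) (t := P)
        (fun e he => (Finset.mem_filter.mp he).2)]
      push_cast
      refine Finset.sum_congr rfl fun i hiP => ?_
      congr 2
      ext e
      simp only [Finset.mem_filter, and_assoc]
      constructor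
      · rintro ⟨h1, h2⟩; exact ⟨h1, h2 ▸ hiP, h2⟩
      · rintro ⟨h1, _, h3⟩; exact ⟨h1, h3⟩
    have hEPcard : ((E.filter (fun e => e.1 ∈ P)).card : ℝ) = (d : ℝ) * P.card := by
      rw [Finset.card_eq_sum_card_fiberwise (f := Prod.fst) (s := E.filter (fun e => e.1 ∈ P)) (t := P)
        (fun e he => (Finset.mem_filter.mp he).2)]
      have hfe : ∀ i ∈ P, ((E.filter (fun e => e.1 ∈ P)).filter (fun e => e.1 = i)).card = d := by
        intro i hiP
        have : (E.filter (fun e => e.1 ∈ P)).filter (fun e => e.1 = i)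
            = E.filter (fun e => e.1 = i) := by
          ext e
          simp only [Finset.mem_filter, and_assoc]
          constructor
          · rintro ⟨h1, _, h3⟩; exact ⟨h1, h3⟩
          · rintro ⟨h1, h3⟩; exact ⟨h1, h3 ▸ hiP, h3⟩
        rw [this, hdeg i]
      rw [Finset.sum_congr rfl hfe, Finset.sum_const, smul_eq_mul]
      push_cast
      ring
    -- partition of EP into GP and CP
    have hunionP : (G.filter (fun e => e.1 ∈ P)) ∪ (C.filter (fun e => e.1 ∈ P))
        = E.filter (fun e => e.1 ∈ P) := by
      ext e
      simp only [Finset.mem_union, Finset.mem_filter, hGdef, hCdef]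
      constructor
      · rintro (⟨⟨h1, _, _⟩, h4⟩ | ⟨⟨h1, _, _⟩, h4⟩) <;> exact ⟨h1, h4⟩
      · rintro ⟨h1, h2⟩
        have hS1 : e.1 ∈ S := hPS h2
        by_cases hc : ∃ i', i' ∈ S ∧ (i', e.2) ∈ E ∧ ρ i' < ρ e.1
        · exact Or.inr ⟨⟨h1, hS1, hc⟩, h2⟩
        · exact Or.inl ⟨⟨h1, hS1, hc⟩, h2⟩
    have hdisjP : Disjoint (G.filter (fun e => e.1 ∈ P)) (C.filter (fun e => e.1 ∈ P)) :=
      Finset.disjoint_filter_filter hdisj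
    have hcardsum : (G.filter (fun e => e.1 ∈ P)).card + (C.filter (fun e => e.1 ∈ P)).card
        = (E.filter (fun e => e.1 ∈ P)).card := by
      rw [← Finset.card_union_of_disjoint hdisjP, hunionP]
    -- GP has the same cardinality as the neighborhood of P
    have himg : (G.filter (fun e => e.1 ∈ P)).image Prod.snd
        = (E.filter (fun e => e.1 ∈ P)).image Prod.snd := by
      apply Finset.Subset.antisymm
      · apply Finset.image_subset_image
        intro e he
        rw [Finset.mem_filter] at he ⊢
        rw [hGdef, Finset.mem_filter] at he
        exact ⟨he.1.1, he.2⟩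
      · intro j hj
        rw [Finset.mem_image] at hj ⊢
        obtain ⟨e, he, hej⟩ := hj
        obtain ⟨heE, heP⟩ := Finset.mem_filter.mp he
        have he1T : e.1 ∈ S.filter (fun i => (i, j) ∈ E) :=
          Finset.mem_filter.mpr ⟨hPS heP, by rw [← hej]; simpa using heE⟩
        have hTne : (S.filter (fun i => (i, j) ∈ E)).Nonempty := ⟨e.1, he1T⟩
        obtain ⟨i0, hi0T, hi0min⟩ := Finset.exists_min_image _ ρ hTne
        have hi0S : i0 ∈ S := (Finset.mem_filter.mp hi0T).1
        have hi0E : (i0, j) ∈ E := (Finset.mem_filter.mp hi0T).2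
        have hi0G : (i0, j) ∈ G :=
          hminG j i0 hi0S hi0E (fun i hiS hiE => hi0min i (Finset.mem_filter.mpr ⟨hiS, hiE⟩))
        have hi0P : i0 ∈ P := hdc e.1 heP i0 hi0S (hi0min e.1 he1T)
        exact ⟨(i0, j), Finset.mem_filter.mpr ⟨hi0G, hi0P⟩, rfl⟩
    have hGPcard : ((G.filter (fun e => e.1 ∈ P)).card : ℝ)
        = (((E.filter (fun e => e.1 ∈ P)).image Prod.snd).card : ℝ) := by
      rw [← himg, Finset.card_image_of_injOn]
      intro e he e' he' hee'
      exact hGuniq e (Finset.mem_filter.mp he).1 e' (Finset.mem_filter.mp he').1 hee'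
    have hexpP := hexp P hPk
    rw [← hGPcard] at hexpP
    have hcast : ((G.filter (fun e => e.1 ∈ P)).card : ℝ)
        + ((C.filter (fun e => e.1 ∈ P)).card : ℝ) = (d : ℝ) * P.card := by
      rw [← hEPcard]
      exact_mod_cast congrArg (Nat.cast : ℕ → ℝ) hcardsum
    have hring : (1 - ε) * (d : ℝ) * P.card = (d : ℝ) * P.card - ε * (d : ℝ) * P.card := by ring
    rw [hCPcard]
    linarith [hexpP, hcast]
  -- sum over C as a fiberwise sum over S
  have hCfib : ∑ e ∈ C, |x e.1|
      = ∑ i ∈ S, ((C.filter (fun e => e.1 = i)).card : ℝ) * |x i| := by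
    have hCmaps : ∀ e ∈ C, e.1 ∈ S := by
      intro e he
      rw [hCdef, Finset.mem_filter] at he
      exact he.2.1
    rw [← Finset.sum_fiberwise_of_maps_to (g := Prod.fst) hCmaps (fun e => |x e.1|)]
    refine Finset.sum_congr rfl fun i hiS => ?_
    have hval : ∀ e ∈ C.filter (fun e => e.1 = i), |x e.1| = |x i| := by
      intro e he; rw [(Finset.mem_filter.mp he).2]
    rw [Finset.sum_congr rfl hval, Finset.sum_const, nsmul_eq_mul]
  -- step B via Abel summation
  have hstepB : ∑ e ∈ C, |x e.1| ≤ ε * (d : ℝ) * ∑ i ∈ S, |x i| := by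
    rw [hCfib]
    exact stmt4_abel ρ _ _ S _ (fun i _ i' _ h => hρinj h) (fun i _ => abs_nonneg _)
      (fun i _ i' _ h => hρmono i i' h) hcount
  -- restrict the full sum to the support
  have hx : ∑ i, |x i| = ∑ i ∈ S, |x i| := by
    refine (Finset.sum_subset (Finset.subset_univ S) ?_).symm
    intro i _ hni
    have : x i = 0 := by
      by_contra h
      exact hni ((hmemS i).mpr h)
    rw [this, abs_zero]
  rw [hx]
  nlinarith [hA, hstepB, hsum_union, hfib]
end

section
/- Let Φ be an m×n binary (0–1) matrix in which each column has exactly d ones. Suppose for some scaling factor S > 0 the matrix S·Φ satisfies the RIP(1,s,δ) property. Then Φ is the adjacency matrix of an (s,ε)-unbalanced expander with ε = (1 − 1/(1+δ))/(2−√2). -/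
open scoped Classical


lemma aux_sqrt (c : ℕ) : Real.sqrt c ≤ (c : ℝ) - (2 - Real.sqrt 2) * ((c : ℝ) - 1) := by
  have h2 : Real.sqrt 2 ^ 2 = 2 := Real.sq_sqrt (by norm_num)
  have hc : Real.sqrt c ^ 2 = (c : ℝ) := Real.sq_sqrt (Nat.cast_nonneg c)
  have hcn : (0:ℝ) ≤ Real.sqrt c := Real.sqrt_nonneg _
  have h2n : (0:ℝ) ≤ Real.sqrt 2 := Real.sqrt_nonneg _
  match c with
  | 0 => simp
  | 1 => norm_num
  | (k+2) =>
    have hge : Real.sqrt 2 ≤ Real.sqrt (k+2 : ℕ) := by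
      apply Real.sqrt_le_sqrt; push_cast; linarith
    nlinarith [sq_nonneg (Real.sqrt (k+2:ℕ) - Real.sqrt 2), sq_nonneg (Real.sqrt (k+2:ℕ) - 1)]

lemma aux_signsum {ι : Type*} [DecidableEq ι] (A T : Finset ι) :
    ∑ i ∈ A, (if i ∈ T then (1:ℝ) else -1) = 2 * ((A ∩ T).card : ℝ) - A.card := by
  have h : ∀ i ∈ A, (if i ∈ T then (1:ℝ) else -1) = (if i ∈ T then (2:ℝ) else 0) - 1 := by
    intro i _; split <;> norm_num
  rw [Finset.sum_congr rfl h, Finset.sum_sub_distrib]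
  simp [Finset.sum_ite, Finset.filter_mem_eq_inter, mul_comm]

lemma aux_inv {ι : Type*} [DecidableEq ι] (X : Finset ι) (i i' : ι) (hi : i ∈ X) (hne : i' ≠ i) :
    ∑ T ∈ X.powerset, (if i ∈ T then (1:ℝ) else -1) * (if i' ∈ T then 1 else -1) = 0 := by
  refine Finset.sum_involution (fun T _ => if i ∈ T then T.erase i else insert i T)
    ?_ ?_ ?_ ?_
  · intro T hT
    by_cases hiT : i ∈ T <;>
      simp only [hiT, if_true, if_false, Finset.mem_erase, Finset.mem_insert, hne,
        Finset.notMem_erase, ne_eq, not_false_iff, and_true, false_or, or_false] <;>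
      by_cases hi'T : i' ∈ T <;> simp [hi'T, hne] <;> ring
  · intro T hT _ heq
    by_cases hiT : i ∈ T
    · have : i ∉ T.erase i := Finset.notMem_erase i T
      simp only [hiT, if_true] at heq; rw [heq] at this; exact this hiT
    · have : i ∈ insert i T := Finset.mem_insert_self i T
      simp only [hiT, if_false] at heq; rw [heq] at this; exact hiT this
  · intro T hT
    have hTX : T ⊆ X := Finset.mem_powerset.mp hT
    rw [Finset.mem_powerset]
    by_cases hiT : i ∈ T
    · simp only [hiT, if_true]
      exact fun x hx => hTX (Finset.mem_of_mem_erase hx)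
    · simp only [hiT, if_false]
      exact Finset.insert_subset hi hTX
  · intro T hT
    by_cases hiT : i ∈ T
    · simp [hiT, Finset.notMem_erase, Finset.insert_erase hiT]
    · simp [hiT, Finset.erase_insert hiT]

lemma aux_sq_sum {ι : Type*} [DecidableEq ι] (X A : Finset ι) (hA : A ⊆ X) :
    ∑ T ∈ X.powerset, (2 * ((A ∩ T).card : ℝ) - A.card) ^ 2 = (2:ℝ) ^ X.card * (A.card:ℝ) := by
  calc ∑ T ∈ X.powerset, (2 * ((A ∩ T).card : ℝ) - A.card) ^ 2
      = ∑ T ∈ X.powerset, ∑ i ∈ A, ∑ i' ∈ A,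
          (if i ∈ T then (1:ℝ) else -1) * (if i' ∈ T then 1 else -1) := by
        refine Finset.sum_congr rfl fun T _ => ?_
        rw [← aux_signsum A T, sq, Finset.sum_mul_sum]
    _ = ∑ i ∈ A, ∑ i' ∈ A, ∑ T ∈ X.powerset,
          (if i ∈ T then (1:ℝ) else -1) * (if i' ∈ T then 1 else -1) := by
        rw [Finset.sum_comm]
        exact Finset.sum_congr rfl fun i _ => Finset.sum_comm
    _ = ∑ i ∈ A, (2:ℝ) ^ X.card := by
        refine Finset.sum_congr rfl fun i hi => ?_
        rw [Finset.sum_eq_single_of_mem i hi]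
        · have h1 : ∀ T ∈ X.powerset,
              (if i ∈ T then (1:ℝ) else -1) * (if i ∈ T then (1:ℝ) else -1) = 1 := by
            intro T _; split <;> norm_num
          rw [Finset.sum_congr rfl h1, Finset.sum_const, Finset.card_powerset]
          push_cast; ring
        · intro i' _ hne
          exact aux_inv X i i' (hA hi) hne
    _ = (2:ℝ) ^ X.card * (A.card:ℝ) := by rw [Finset.sum_const]; push_cast; ring

lemma aux_khintchine {ι : Type*} [DecidableEq ι] (X A : Finset ι) (hA : A ⊆ X) :
    ∑ T ∈ X.powerset, |2 * ((A ∩ T).card : ℝ) - A.card| ≤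
      (2:ℝ) ^ X.card * Real.sqrt A.card := by
  set L := ∑ T ∈ X.powerset, |2 * ((A ∩ T).card : ℝ) - A.card| with hL
  have hL0 : 0 ≤ L := Finset.sum_nonneg fun T _ => abs_nonneg _
  have hCS := Finset.sum_mul_sq_le_sq_mul_sq X.powerset (fun _ => (1:ℝ))
    (fun T => |2 * ((A ∩ T).card : ℝ) - A.card|)
  simp only [one_mul, one_pow] at hCS
  have hsum1 : ∑ _T ∈ X.powerset, (1:ℝ) = (2:ℝ) ^ X.card := by
    rw [Finset.sum_const, Finset.card_powerset]; push_cast; ring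
  have habs : ∑ T ∈ X.powerset, |2 * ((A ∩ T).card : ℝ) - A.card| ^ 2
      = (2:ℝ) ^ X.card * (A.card:ℝ) := by
    rw [← aux_sq_sum X A hA]
    exact Finset.sum_congr rfl fun T _ => sq_abs _
  have hsq : L ^ 2 ≤ ((2:ℝ) ^ X.card) ^ 2 * (A.card:ℝ) := by
    calc L ^ 2 ≤ (∑ _T ∈ X.powerset, (1:ℝ)) * ((2:ℝ) ^ X.card * (A.card:ℝ)) := by
          rw [← habs]; exact hCS
      _ = ((2:ℝ) ^ X.card) ^ 2 * (A.card:ℝ) := by rw [hsum1]; ring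
  calc L = Real.sqrt (L ^ 2) := (Real.sqrt_sq hL0).symm
    _ ≤ Real.sqrt (((2:ℝ) ^ X.card) ^ 2 * (A.card:ℝ)) := Real.sqrt_le_sqrt hsq
    _ = (2:ℝ) ^ X.card * Real.sqrt A.card := by
        rw [Real.sqrt_mul (sq_nonneg _), Real.sqrt_sq (by positivity)]

/-- If `Φ` is an `m×n` 0–1 matrix with exactly `d` ones per column, and for some scaling
`S > 0` the matrix `S·Φ` satisfies RIP(1,s,δ), then `Φ` is the adjacency matrix of an
`(s,ε)`-unbalanced expander with `ε = (1 − 1/(1+δ))/(2−√2)`. -/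
theorem stmt7 (n m s d : ℕ) (δ S : ℝ) (hS : 0 < S)
    (Φ : Matrix (Fin m) (Fin n) ℝ)
    (h01 : ∀ j i, Φ j i = 0 ∨ Φ j i = 1)
    (hcol : ∀ i : Fin n, (Finset.univ.filter fun j : Fin m => Φ j i = 1).card = d)
    (hRIP : ∀ x : Fin n → ℝ, (Finset.univ.filter fun i => x i ≠ 0).card ≤ s →
      ∑ i, |x i| ≤ ∑ j, |((S • Φ).mulVec x) j| ∧
      ∑ j, |((S • Φ).mulVec x) j| ≤ (1 + δ) * ∑ i, |x i|) :
    ∀ X : Finset (Fin n), X.card ≤ s →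
      (1 - (1 - 1 / (1 + δ)) / (2 - Real.sqrt 2)) * d * X.card ≤
        ((Finset.univ.filter fun j : Fin m => ∃ i ∈ X, Φ j i = 1).card : ℝ) := by
  intro X hXs
  rcases X.eq_empty_or_nonempty with hX | ⟨i₀, hi₀⟩
  · subst hX; simp
  set N : Finset (Fin m) := Finset.univ.filter fun j : Fin m => ∃ i ∈ X, Φ j i = 1 with hN
  set k : ℕ := X.card with hk
  set r : ℕ := N.card with hr
  set A : Fin m → Finset (Fin n) := fun j => X.filter fun i => Φ j i = 1 with hA
  set c : Fin m → ℕ := fun j => (A j).card with hc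
  have hk1 : 1 ≤ k := Finset.card_pos.mpr ⟨i₀, hi₀⟩
  -- Step 1 : 1 ≤ S*d ≤ 1+δ via the test vector e_{i₀}
  have hstep1 : 1 ≤ S * d ∧ S * d ≤ 1 + δ := by
    set e : Fin n → ℝ := fun i => if i = i₀ then 1 else 0 with he
    have hsupp : (Finset.univ.filter fun i => e i ≠ 0).card ≤ s := by
      have : (Finset.univ.filter fun i => e i ≠ 0) = {i₀} := by
        ext i; simp [he]
      rw [this, Finset.card_singleton]
      exact le_trans hk1 hXs
    have hsum : ∑ i, |e i| = 1 := by
      have h1 : ∀ i, |e i| = if i = i₀ then 1 else 0 := by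
        intro i; simp [he, apply_ite abs]
      simp only [h1]
      rw [Finset.sum_ite_eq' Finset.univ i₀ (fun _ => 1)]
      simp
    have hmv : ∀ j, ((S • Φ).mulVec e) j = S * Φ j i₀ := by
      intro j
      simp only [Matrix.mulVec, dotProduct, Matrix.smul_apply, smul_eq_mul, he,
        mul_ite, mul_one, mul_zero]
      rw [Finset.sum_ite_eq' Finset.univ i₀ (fun i => S * Φ j i)]
      simp
    have hsum2 : ∑ j, |((S • Φ).mulVec e) j| = S * d := by
      have h2 : ∀ j, |((S • Φ).mulVec e) j| = S * (if Φ j i₀ = 1 then 1 else 0) := by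
        intro j
        rw [hmv j]
        rcases h01 j i₀ with h | h <;> simp [h, abs_of_nonneg hS.le]
      simp only [h2, ← Finset.mul_sum]
      rw [Finset.sum_boole]
      rw [hcol i₀]
    obtain ⟨hlo, hhi⟩ := hRIP e hsupp
    rw [hsum, hsum2] at hlo hhi
    rw [mul_one] at hhi
    exact ⟨hlo, hhi⟩
  obtain ⟨h1Sd, hSd⟩ := hstep1
  have hδ : 0 < 1 + δ := lt_of_lt_of_le one_pos (le_trans h1Sd hSd)
  have hs2 : Real.sqrt 2 < 2 := by
    nlinarith [Real.sq_sqrt (by norm_num : (0:ℝ) ≤ 2), Real.sqrt_nonneg 2]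
  -- Step 2 : total degree count
  have hcsum : ∑ j, c j = k * d := by
    have h1 : ∀ j, c j = ∑ i ∈ X, if Φ j i = 1 then 1 else 0 := by
      intro j; simp only [hc, hA]; exact Finset.card_filter _ _
    simp only [h1]
    rw [Finset.sum_comm]
    have h2 : ∀ i ∈ X, (∑ j : Fin m, if Φ j i = 1 then 1 else 0) = d := by
      intro i _
      rw [← hcol i, Finset.card_filter]
    rw [Finset.sum_congr rfl h2, Finset.sum_const, smul_eq_mul]
  have hcN0 : ∀ j, j ∉ N → c j = 0 := by
    intro j hj
    rw [hN, Finset.mem_filter] at hj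
    push_neg at hj
    rw [hc]
    simp only [Finset.card_eq_zero, hA]
    rw [Finset.filter_eq_empty_iff]
    intro i hi
    exact hj (Finset.mem_univ j) i hi
  have hcN1 : ∀ j ∈ N, 1 ≤ c j := by
    intro j hj
    rw [hN, Finset.mem_filter] at hj
    obtain ⟨-, i, hi, hΦ⟩ := hj
    exact Finset.card_pos.mpr ⟨i, Finset.mem_filter.mpr ⟨hi, hΦ⟩⟩
  -- Step 3 : find a good sign pattern T
  have hkey : ∃ T ∈ X.powerset,
      (∑ j, |2 * (((A j) ∩ T).card : ℝ) - ((c j : ℕ) : ℝ)|) ≤ ∑ j, Real.sqrt (c j) := by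
    apply Finset.exists_le_of_sum_le ⟨∅, Finset.mem_powerset.mpr (Finset.empty_subset X)⟩
    rw [Finset.sum_comm]
    calc ∑ j, ∑ T ∈ X.powerset, |2 * (((A j) ∩ T).card : ℝ) - ((c j : ℕ) : ℝ)|
        ≤ ∑ j, (2:ℝ) ^ k * Real.sqrt (c j) := by
          apply Finset.sum_le_sum
          intro j _
          exact aux_khintchine X (A j) (Finset.filter_subset _ _)
      _ = ∑ _T ∈ X.powerset, ∑ j, Real.sqrt (c j) := by
          rw [Finset.sum_const, Finset.card_powerset, ← Finset.mul_sum]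
          push_cast; ring
  obtain ⟨T, hT, hTle⟩ := hkey
  -- Step 4 : RIP lower bound on the sign vector
  set σ : Fin n → ℝ := fun i => if i ∈ X then (if i ∈ T then 1 else -1) else 0 with hσ
  have hσsupp : (Finset.univ.filter fun i => σ i ≠ 0).card ≤ s := by
    have : (Finset.univ.filter fun i => σ i ≠ 0) = X := by
      ext i
      simp only [Finset.mem_filter, Finset.mem_univ, true_and, hσ]
      by_cases hi : i ∈ X
      · simp only [hi, if_true, iff_true]
        split <;> norm_num
      · simp [hi]
    rw [this]; exact hXs
  have hσsum : ∑ i, |σ i| = (k : ℝ) := by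
    have h1 : ∀ i, |σ i| = if i ∈ X then 1 else 0 := by
      intro i
      rw [hσ]
      by_cases hi : i ∈ X
      · simp only [hi, if_true]; split <;> norm_num
      · simp [hi]
    simp only [h1]
    rw [Finset.sum_boole]
    simp [hk]
  have hmvσ : ∀ j, ((S • Φ).mulVec σ) j = S * (2 * (((A j) ∩ T).card : ℝ) - ((c j : ℕ) : ℝ)) := by
    intro j
    have h1 : ∑ i, Φ j i * σ i = ∑ i ∈ A j, (if i ∈ T then (1:ℝ) else -1) := by
      rw [← Finset.sum_subset (Finset.subset_univ (A j))]
      · apply Finset.sum_congr rfl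
        intro i hi
        rw [hA] at hi
        obtain ⟨hiX, hΦ⟩ := Finset.mem_filter.mp hi
        rw [hΦ, hσ]
        simp [hiX]
      · intro i _ hi
        rw [hA, Finset.mem_filter] at hi
        push_neg at hi
        by_cases hiX : i ∈ X
        · have : Φ j i = 0 := (h01 j i).resolve_right (hi hiX)
          rw [this, zero_mul]
        · rw [hσ]; simp [hiX]
    have h2 : ((S • Φ).mulVec σ) j = S * ∑ i, Φ j i * σ i := by
      simp only [Matrix.mulVec, dotProduct, Matrix.smul_apply, smul_eq_mul,
        Finset.mul_sum, mul_assoc]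
    rw [h2, h1, aux_signsum (A j) T, hc]
  have hlow := (hRIP σ hσsupp).1
  rw [hσsum] at hlow
  have hlow2 : (k : ℝ) ≤ S * ∑ j, Real.sqrt (c j) := by
    calc (k : ℝ) ≤ ∑ j, |((S • Φ).mulVec σ) j| := hlow
      _ = S * ∑ j, |2 * (((A j) ∩ T).card : ℝ) - ((c j : ℕ) : ℝ)| := by
          rw [Finset.mul_sum]
          apply Finset.sum_congr rfl
          intro j _
          rw [hmvσ j, abs_mul, abs_of_nonneg hS.le]
      _ ≤ S * ∑ j, Real.sqrt (c j) := by
          apply mul_le_mul_of_nonneg_left hTle hS.le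
  -- Step 5 : bound the sum of square roots
  have hsqrtb : ∑ j, Real.sqrt (c j) ≤
      (d : ℝ) * k - (2 - Real.sqrt 2) * ((d : ℝ) * k - r) := by
    have hNsub : N ⊆ Finset.univ := Finset.subset_univ N
    have hzero : ∀ j ∈ Finset.univ, j ∉ N → Real.sqrt (c j) = 0 := by
      intro j _ hj
      rw [hcN0 j hj]
      simp
    have hcNsum : ∑ j ∈ N, ((c j : ℕ) : ℝ) = (d : ℝ) * k := by
      have : ∑ j ∈ N, ((c j : ℕ) : ℝ) = ∑ j, ((c j : ℕ) : ℝ) := by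
        apply Finset.sum_subset hNsub
        intro j _ hj
        rw [hcN0 j hj]; simp
      rw [this, ← Nat.cast_sum, hcsum]
      push_cast
      ring
    calc ∑ j, Real.sqrt (c j) = ∑ j ∈ N, Real.sqrt (c j) :=
          (Finset.sum_subset hNsub hzero).symm
      _ ≤ ∑ j ∈ N, (((c j : ℕ) : ℝ) - (2 - Real.sqrt 2) * (((c j : ℕ) : ℝ) - 1)) := by
          apply Finset.sum_le_sum
          intro j _
          exact aux_sqrt (c j)
      _ = (∑ j ∈ N, ((c j : ℕ) : ℝ)) - (2 - Real.sqrt 2) * ((∑ j ∈ N, ((c j : ℕ) : ℝ)) - r) := by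
          rw [Finset.sum_sub_distrib]
          congr 1
          rw [← Finset.mul_sum]
          congr 1
          rw [Finset.sum_sub_distrib, Finset.sum_const]
          simp [hr, nsmul_eq_mul]
      _ = (d : ℝ) * k - (2 - Real.sqrt 2) * ((d : ℝ) * k - r) := by rw [hcNsum]
  -- Step 6 : conclude
  have hrdk : (r : ℝ) ≤ (d : ℝ) * k := by
    have : r ≤ ∑ j ∈ N, c j := by
      rw [hr, Finset.card_eq_sum_ones N]
      exact Finset.sum_le_sum hcN1
    have h2 : ∑ j ∈ N, c j ≤ ∑ j, c j := Finset.sum_le_sum_of_subset (Finset.subset_univ N)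
    have h3 : (r : ℝ) ≤ (∑ j, c j : ℕ) := by exact_mod_cast le_trans this h2
    rw [hcsum] at h3
    push_cast at h3
    linarith
  have hmain : (k : ℝ) ≤ S * ((d : ℝ) * k - (2 - Real.sqrt 2) * ((d : ℝ) * k - r)) :=
    le_trans hlow2 (mul_le_mul_of_nonneg_left hsqrtb hS.le)
  -- derive (1+δ)*(2-√2)*(dk - r) ≤ δ*(dk)
  have hkpos : (0:ℝ) < k := by exact_mod_cast hk1
  have hkey2 : (1 + δ) * (2 - Real.sqrt 2) * ((d : ℝ) * k - r) ≤ δ * ((d : ℝ) * k) := by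
    have hQ : (d : ℝ) * k ≤ (1 + δ) * ((d : ℝ) * k - (2 - Real.sqrt 2) * ((d : ℝ) * k - r)) := by
      have e1 : S * ((d : ℝ) * k) ≤ S * ((1 + δ) * ((d : ℝ) * k - (2 - Real.sqrt 2) * ((d : ℝ) * k - r))) := by
        have e2 : S * (d : ℝ) * k ≤ (1 + δ) * k := by
          apply mul_le_mul_of_nonneg_right hSd hkpos.le |>.trans_eq rfl
        nlinarith [hmain, hδ]
      exact le_of_mul_le_mul_left (by linarith [e1]) hS
    nlinarith [hQ]
  have hfinal : (d : ℝ) * k - r ≤ (1 - 1 / (1 + δ)) / (2 - Real.sqrt 2) * ((d : ℝ) * k) := by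
    rw [div_mul_eq_mul_div, le_div_iff₀ (by linarith : (0:ℝ) < 2 - Real.sqrt 2)]
    have h : (1 - 1 / (1 + δ)) = δ / (1 + δ) := by field_simp; ring
    rw [h, div_mul_eq_mul_div, le_div_iff₀ hδ]
    nlinarith [hkey2]
  nlinarith [hfinal]
end

section
/- For any vector g ∈ ℝ^n, any 1 < p ≤ 2, and any positive integer t < n, the tail g − g_t (obtained by zeroing out the t largest-magnitude entries of g) satisfies ‖g − g_t‖_p ≤ (1/(p−1))^{1/p} · t^{1/p − 1} · ‖g‖₁. -/
/-- Tail bound: for `g ∈ ℝ^n`, `1 < p ≤ 2`, and `0 < t < n`, if `T` is a set of `t`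
coordinates carrying the `t` largest-magnitude entries of `g`, then
`‖g − g_T‖_p ≤ (1/(p−1))^{1/p} · t^{1/p−1} · ‖g‖₁`. -/
theorem stmt12 (n t : ℕ) (ht : 0 < t) (htn : t < n) (p : ℝ) (hp1 : 1 < p) (hp2 : p ≤ 2)
    (g : Fin n → ℝ) (T : Finset (Fin n)) (hT : T.card = t)
    (hTmax : ∀ i ∈ T, ∀ j ∉ T, |g j| ≤ |g i|) :
    (∑ i ∈ Tᶜ, |g i| ^ p) ^ (1 / p) ≤
      (1 / (p - 1)) ^ (1 / p) * (t : ℝ) ^ (1 / p - 1) * ∑ i, |g i| := by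
  have hp0 : (0:ℝ) < p := lt_trans one_pos hp1
  have hpne : p ≠ 0 := ne_of_gt hp0
  set S := ∑ i, |g i| with hS
  have hS0 : 0 ≤ S := Finset.sum_nonneg fun i _ => abs_nonneg _
  have ht' : (0:ℝ) < (t:ℝ) := by exact_mod_cast ht
  have hsubsum : ∀ (A : Finset (Fin n)), ∑ i ∈ A, |g i| ≤ S := by
    intro A
    exact Finset.sum_le_sum_of_subset_of_nonneg (Finset.subset_univ A)
      (fun i _ _ => abs_nonneg _)
  have hM : ∀ i ∉ T, |g i| ≤ S / t := by
    intro i hi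
    rw [le_div_iff₀ ht']
    calc |g i| * t = ∑ _j ∈ T, |g i| := by
          rw [Finset.sum_const, hT, nsmul_eq_mul, mul_comm]
      _ ≤ ∑ j ∈ T, |g j| := Finset.sum_le_sum fun j hj => hTmax j hj i hi
      _ ≤ S := hsubsum T
  have key : ∑ i ∈ Tᶜ, |g i| ^ p ≤ (S / t) ^ (p - 1) * S := by
    calc ∑ i ∈ Tᶜ, |g i| ^ p ≤ ∑ i ∈ Tᶜ, (S / t) ^ (p - 1) * |g i| := by
          apply Finset.sum_le_sum
          intro i hi
          have hi' : i ∉ T := Finset.mem_compl.mp hi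
          have h1 : |g i| ^ p = |g i| ^ (p - 1) * |g i| := by
            have hpe : (p - 1) + 1 = p := by ring
            rw [← hpe, Real.rpow_add' (abs_nonneg _) (by rw [hpe]; exact hpne),
              Real.rpow_one]
            norm_num
          rw [h1]
          exact mul_le_mul_of_nonneg_right
            (Real.rpow_le_rpow (abs_nonneg _) (hM i hi') (by linarith)) (abs_nonneg _)
      _ = (S / t) ^ (p - 1) * ∑ i ∈ Tᶜ, |g i| := by rw [Finset.mul_sum]
      _ ≤ (S / t) ^ (p - 1) * S :=
          mul_le_mul_of_nonneg_left (hsubsum _) (Real.rpow_nonneg (by positivity) _)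
  have step1 : (∑ i ∈ Tᶜ, |g i| ^ p) ^ (1 / p) ≤ ((S / t) ^ (p - 1) * S) ^ (1 / p) :=
    Real.rpow_le_rpow (Finset.sum_nonneg fun i _ => Real.rpow_nonneg (abs_nonneg _) _)
      key (by positivity)
  have step2 : ((S / t) ^ (p - 1) * S) ^ (1 / p) = (t:ℝ) ^ (1 / p - 1) * S := by
    rw [Real.div_rpow hS0 ht'.le, div_mul_eq_mul_div,
      Real.div_rpow (by positivity) (by positivity)]
    have e1 : S ^ (p - 1) * S = S ^ p := by
      have hpe : (p - 1) + 1 = p := by ring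
      rw [← hpe, Real.rpow_add' hS0 (by rw [hpe]; exact hpne), Real.rpow_one]
      norm_num
    have e2 : (S ^ p) ^ (1 / p) = S := by
      rw [← Real.rpow_mul hS0, mul_one_div, div_self hpne, Real.rpow_one]
    have e3 : ((t:ℝ) ^ (p - 1)) ^ (1 / p) = (t:ℝ) ^ (1 - 1 / p) := by
      rw [← Real.rpow_mul ht'.le]
      congr 1
      field_simp
    rw [e1, e2, e3, div_eq_mul_inv, ← Real.rpow_neg ht'.le]
    rw [mul_comm]
    congr 1
    ring
  have hfac : (1:ℝ) ≤ (1 / (p - 1)) ^ (1 / p) := by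
    apply Real.one_le_rpow
    · rw [le_div_iff₀ (by linarith)]; linarith
    · positivity
  calc (∑ i ∈ Tᶜ, |g i| ^ p) ^ (1 / p) ≤ (t:ℝ) ^ (1 / p - 1) * S := by
        rw [← step2]; exact step1
    _ ≤ (1 / (p - 1)) ^ (1 / p) * ((t:ℝ) ^ (1 / p - 1) * S) := by
        apply le_mul_of_one_le_left _ hfac
        exact mul_nonneg (Real.rpow_nonneg ht'.le _) hS0
    _ = (1 / (p - 1)) ^ (1 / p) * (t:ℝ) ^ (1 / p - 1) * S := by ring
end

section
/- Suppose x, x̃ ∈ ℝ^n and 1 < p ≤ 2 satisfy ‖x̃ − x‖_p ≤ ε·k^{1/p−1}·‖x_k − x‖₁. Then the k-term truncation x̃_k of x̃ satisfies ‖x̃_k − x‖₁ ≤ (1 + 2^{2−1/p}ε)·‖x_k − x‖₁ (in particular ‖x̃_k − x‖₁ ≤ (1+3ε)‖x_k − x‖₁ for ε ≥ 0). -/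
/-- If `‖x̃ − x‖_p ≤ ε·k^{1/p−1}·‖x_k − x‖₁`, then the `k`-term truncation `x̃_k` of `x̃`
satisfies `‖x̃_k − x‖₁ ≤ (1 + 2^{2−1/p}ε)·‖x_k − x‖₁`, and in particular
`‖x̃_k − x‖₁ ≤ (1+3ε)·‖x_k − x‖₁`. Here `K` (resp. `K'`) is the set of the `k`
largest-magnitude coordinates of `x` (resp. `x̃`), so `‖x_k − x‖₁ = ∑_{i ∉ K} |x i|`. -/
theorem stmt15 (n k : ℕ) (hk : 0 < k) (p ε : ℝ) (hp1 : 1 < p) (hp2 : p ≤ 2) (hε : 0 < ε)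
    (x xt : Fin n → ℝ)
    (K K' : Finset (Fin n)) (hK : K.card = k) (hK' : K'.card = k)
    (hKmax : ∀ i ∈ K, ∀ j ∉ K, |x j| ≤ |x i|)
    (hK'max : ∀ i ∈ K', ∀ j ∉ K', |xt j| ≤ |xt i|)
    (h : (∑ i, |xt i - x i| ^ p) ^ (1 / p) ≤ ε * (k : ℝ) ^ (1 / p - 1) * ∑ i ∈ Kᶜ, |x i|) :
    ∑ i, |(if i ∈ K' then xt i else 0) - x i| ≤
        (1 + (2 : ℝ) ^ (2 - 1 / p) * ε) * ∑ i ∈ Kᶜ, |x i| ∧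
    ∑ i, |(if i ∈ K' then xt i else 0) - x i| ≤ (1 + 3 * ε) * ∑ i ∈ Kᶜ, |x i| := by
  have hp0 : (0 : ℝ) < p := by linarith
  set σ : ℝ := ∑ i ∈ Kᶜ, |x i| with hσdef
  have hσ0 : 0 ≤ σ := Finset.sum_nonneg fun i _ => abs_nonneg _
  set v : Fin n → ℝ := fun i => |xt i - x i| with hvdef
  have hv0 : ∀ i, 0 ≤ v i := fun i => abs_nonneg _
  set H : Finset (Fin n) := K ∪ K' with hHdef
  -- Step A: decompose the LHS
  have hA : ∑ i, |(if i ∈ K' then xt i else 0) - x i|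
      = ∑ i ∈ K', v i + ∑ i ∈ K'ᶜ, |x i| := by
    rw [← Finset.sum_add_sum_compl K']
    congr 1
    · exact Finset.sum_congr rfl fun i hi => by simp [hvdef, if_pos hi]
    · refine Finset.sum_congr rfl fun i hi => ?_
      rw [Finset.mem_compl] at hi
      rw [if_neg hi, zero_sub, abs_neg]
  -- Step B: exchange of sets identity
  have hB : ∑ i ∈ K'ᶜ, |x i| + ∑ i ∈ K' \ K, |x i| = σ + ∑ i ∈ K \ K', |x i| := by
    rw [hσdef, ← Finset.sum_union (by
      simp only [Finset.disjoint_left, Finset.mem_compl, Finset.mem_sdiff]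
      tauto), ← Finset.sum_union (by
      simp only [Finset.disjoint_left, Finset.mem_compl, Finset.mem_sdiff]
      tauto)]
    apply Finset.sum_congr _ fun _ _ => rfl
    ext i
    simp only [Finset.mem_union, Finset.mem_compl, Finset.mem_sdiff]
    tauto
  have hcard : (K \ K').card = (K' \ K).card :=
    Finset.card_sdiff_comm (hK.trans hK'.symm)
  -- Step D: sets of k largest entries
  have hD : ∑ i ∈ K \ K', |xt i| ≤ ∑ i ∈ K' \ K, |xt i| := by
    rcases (K' \ K).eq_empty_or_nonempty with he | hne
    · have h0 : (K \ K').card = 0 := by rw [hcard, he, Finset.card_empty]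
      rw [Finset.card_eq_zero] at h0
      simp [h0, he]
    · obtain ⟨j, hj, hjmin⟩ := Finset.exists_min_image (K' \ K) (fun i => |xt i|) hne
      have hjK' : j ∈ K' := (Finset.mem_sdiff.1 hj).1
      calc ∑ i ∈ K \ K', |xt i| ≤ (K \ K').card • |xt j| := by
            apply Finset.sum_le_card_nsmul
            intro i hi
            exact hK'max j hjK' i (Finset.mem_sdiff.1 hi).2
        _ = (K' \ K).card • |xt j| := by rw [hcard]
        _ ≤ ∑ i ∈ K' \ K, |xt i| := Finset.card_nsmul_le_sum _ _ _ hjmin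
  -- pointwise triangle inequalities
  have htri : ∀ i, |x i| ≤ |xt i| + v i := fun i => by
    have h1 := abs_sub_abs_le_abs_sub (x i) (xt i)
    have h2 : |x i - xt i| = v i := by rw [hvdef]; exact abs_sub_comm _ _
    linarith
  have htri' : ∀ i, |xt i| ≤ |x i| + v i := fun i => by
    have h1 := abs_sub_abs_le_abs_sub (xt i) (x i)
    linarith
  -- Step: main structural bound
  have hmain : ∑ i, |(if i ∈ K' then xt i else 0) - x i| ≤ σ + 2 * ∑ i ∈ H, v i := by
    rw [hA]
    have t1 : ∑ i ∈ K \ K', |x i| ≤ ∑ i ∈ K \ K', |xt i| + ∑ i ∈ K \ K', v i := by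
      rw [← Finset.sum_add_distrib]; exact Finset.sum_le_sum fun i _ => htri i
    have t3 : ∑ i ∈ K' \ K, |xt i| ≤ ∑ i ∈ K' \ K, |x i| + ∑ i ∈ K' \ K, v i := by
      rw [← Finset.sum_add_distrib]; exact Finset.sum_le_sum fun i _ => htri' i
    have hu : ∑ i ∈ K', v i + ∑ i ∈ K \ K', v i = ∑ i ∈ H, v i := by
      rw [← Finset.sum_union (by
        simp only [Finset.disjoint_left, Finset.mem_sdiff]; tauto)]
      apply Finset.sum_congr _ fun _ _ => rfl
      ext i
      simp only [hHdef, Finset.mem_union, Finset.mem_sdiff]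
      tauto
    have hsub : ∑ i ∈ K' \ K, v i ≤ ∑ i ∈ H, v i := by
      apply Finset.sum_le_sum_of_subset_of_nonneg _ fun i _ _ => hv0 i
      intro i hi
      simp only [hHdef, Finset.mem_union]
      exact Or.inr (Finset.mem_sdiff.1 hi).1
    linarith [hB, t1, hD, t3, hu, hsub]
  -- Hölder: ∑_{H} v ≤ card(H)^(1-1/p) * ‖v‖_p
  have hq := Real.HolderConjugate.conjExponent hp1
  set q : ℝ := Real.conjExponent p with hqdef
  have hq0 : 0 < q := hq.symm.pos
  have hqinv : 1 / q = 1 - 1 / p := by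
    have := hq.inv_add_inv_eq_one
    rw [one_div, one_div]
    linarith
  have hHolder : ∑ i ∈ H, v i ≤ (H.card : ℝ) ^ (1 - 1 / p) * (∑ i, v i ^ p) ^ (1 / p) := by
    have h1 := Real.inner_le_Lp_mul_Lq H v (fun _ => 1) hq
    simp only [mul_one, abs_one, Real.one_rpow, Finset.sum_const, nsmul_eq_mul] at h1
    have h2 : ∀ i, |v i| = v i := fun i => abs_of_nonneg (hv0 i)
    simp only [h2] at h1
    rw [hqinv] at h1
    calc ∑ i ∈ H, v i ≤ (∑ i ∈ H, v i ^ p) ^ (1 / p) * (H.card : ℝ) ^ (1 - 1 / p) := h1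
      _ = (H.card : ℝ) ^ (1 - 1 / p) * (∑ i ∈ H, v i ^ p) ^ (1 / p) := mul_comm _ _
      _ ≤ (H.card : ℝ) ^ (1 - 1 / p) * (∑ i, v i ^ p) ^ (1 / p) := by
          apply mul_le_mul_of_nonneg_left _ (Real.rpow_nonneg (Nat.cast_nonneg _) _)
          apply Real.rpow_le_rpow (Finset.sum_nonneg fun i _ => Real.rpow_nonneg (hv0 i) p)
            _ (by positivity)
          exact Finset.sum_le_sum_of_subset_of_nonneg (Finset.subset_univ H)
            fun i _ _ => Real.rpow_nonneg (hv0 i) p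
  have hexp0 : 0 ≤ 1 - 1 / p := by
    have : 1 / p ≤ 1 := by
      rw [div_le_one hp0]; linarith
    linarith
  -- bound cardinality
  have hcardH : (H.card : ℝ) ≤ 2 * k := by
    have := Finset.card_union_le K K'
    rw [hK, hK'] at this
    have : (H.card : ℝ) ≤ ((k + k : ℕ) : ℝ) := by exact_mod_cast this
    push_cast at this
    linarith
  have hk0 : (0 : ℝ) < (k : ℝ) := by exact_mod_cast hk
  -- combine: ∑_{H} v ≤ 2^(1-1/p) * ε * σ
  have hEv : ∑ i ∈ H, v i ≤ (2 : ℝ) ^ (1 - 1 / p) * ε * σ := by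
    have hc : (H.card : ℝ) ^ (1 - 1 / p) ≤ (2 * (k : ℝ)) ^ (1 - 1 / p) :=
      Real.rpow_le_rpow (Nat.cast_nonneg _) hcardH hexp0
    have hnorm : (∑ i, v i ^ p) ^ (1 / p) ≤ ε * (k : ℝ) ^ (1 / p - 1) * σ := by
      simpa [hvdef, hσdef] using h
    have hnn : 0 ≤ (∑ i, v i ^ p) ^ (1 / p) :=
      Real.rpow_nonneg (Finset.sum_nonneg fun i _ => Real.rpow_nonneg (hv0 i) p) _
    calc ∑ i ∈ H, v i ≤ (H.card : ℝ) ^ (1 - 1 / p) * (∑ i, v i ^ p) ^ (1 / p) := hHolder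
      _ ≤ (2 * (k : ℝ)) ^ (1 - 1 / p) * (ε * (k : ℝ) ^ (1 / p - 1) * σ) := by
          apply mul_le_mul hc hnorm hnn (Real.rpow_nonneg (by positivity) _)
      _ = (2 : ℝ) ^ (1 - 1 / p) * ε * σ *
            ((k : ℝ) ^ (1 - 1 / p) * (k : ℝ) ^ (1 / p - 1)) := by
          rw [Real.mul_rpow (by norm_num) (le_of_lt hk0)]
          ring
      _ = (2 : ℝ) ^ (1 - 1 / p) * ε * σ := by
          rw [← Real.rpow_add hk0]
          norm_num
  have h2pow : 2 * (2 : ℝ) ^ (1 - 1 / p) = (2 : ℝ) ^ (2 - 1 / p) := by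
    rw [show (2 : ℝ) - 1 / p = 1 + (1 - 1 / p) by ring, Real.rpow_add (by norm_num),
      Real.rpow_one]
  have first : ∑ i, |(if i ∈ K' then xt i else 0) - x i|
      ≤ (1 + (2 : ℝ) ^ (2 - 1 / p) * ε) * σ := by
    calc ∑ i, |(if i ∈ K' then xt i else 0) - x i| ≤ σ + 2 * ∑ i ∈ H, v i := hmain
      _ ≤ σ + 2 * ((2 : ℝ) ^ (1 - 1 / p) * ε * σ) := by linarith [hEv]
      _ = (1 + (2 : ℝ) ^ (2 - 1 / p) * ε) * σ := by rw [← h2pow]; ring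
  refine ⟨first, ?_⟩
  -- 2^(2 - 1/p) ≤ 3
  have hhalf : (1 : ℝ) / 2 ≤ 1 / p := by
    rw [div_le_div_iff₀ (by norm_num) hp0]
    linarith
  have h32 : (2 : ℝ) ^ (2 - 1 / p) ≤ (2 : ℝ) ^ ((3 : ℝ) / 2) := by
    apply Real.rpow_le_rpow_of_exponent_le (by norm_num)
    linarith
  have h3 : (2 : ℝ) ^ ((3 : ℝ) / 2) ≤ 3 := by
    have hsq : ((2 : ℝ) ^ ((3 : ℝ) / 2)) ^ (2 : ℕ) ≤ (3 : ℝ) ^ (2 : ℕ) := by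
      rw [← Real.rpow_natCast ((2 : ℝ) ^ ((3 : ℝ) / 2)) 2, ← Real.rpow_mul (by norm_num)]
      rw [show (3 : ℝ) / 2 * ((2 : ℕ) : ℝ) = ((3 : ℕ) : ℝ) by push_cast; ring,
        Real.rpow_natCast]
      norm_num
    exact le_of_pow_le_pow_left₀ (by norm_num) (by norm_num) hsq
  calc ∑ i, |(if i ∈ K' then xt i else 0) - x i| ≤ (1 + (2 : ℝ) ^ (2 - 1 / p) * ε) * σ := first
    _ ≤ (1 + 3 * ε) * σ := by
        apply mul_le_mul_of_nonneg_right _ hσ0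
        have : (2 : ℝ) ^ (2 - 1 / p) ≤ 3 := le_trans h32 h3
        nlinarith [hε.le, this]
end

section
/- Suppose an m×n matrix Φ satisfies RIP(p,K,δ), i.e., ‖y‖_p ≤ ‖Φy‖_p ≤ (1+δ)‖y‖_p for all K-sparse y. Then for every x ∈ ℝ^n, ‖Φx‖_p ≤ (1+δ)·(‖x‖_p + K^{1/p−1}·‖x‖₁). -/
open scoped Classical

open Finset

private lemma Lp_sum_le {m : ℕ} {p : ℝ} (hp : 1 ≤ p) (N : ℕ) (f : ℕ → Fin m → ℝ) :
    (∑ j, |∑ i ∈ range N, f i j| ^ p) ^ (1 / p) ≤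
      ∑ i ∈ range N, (∑ j, |f i j| ^ p) ^ (1 / p) := by
  have hp0 : p ≠ 0 := by positivity
  induction N with
  | zero => simp [Real.zero_rpow hp0, one_div, Real.zero_rpow (inv_ne_zero hp0)]
  | succ N ih =>
      have h1 : (∑ j, |∑ i ∈ range (N+1), f i j| ^ p) ^ (1/p)
          ≤ (∑ j, |∑ i ∈ range N, f i j| ^ p) ^ (1/p) + (∑ j, |f N j| ^ p) ^ (1/p) := by
        simp only [Finset.sum_range_succ]
        exact Real.Lp_add_le Finset.univ _ _ hp
      rw [Finset.sum_range_succ]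
      exact h1.trans (add_le_add ih le_rfl)

/-- If an `m×n` matrix `Φ` satisfies RIP(p,K,δ), then for every `x ∈ ℝ^n`,
`‖Φx‖_p ≤ (1+δ)·(‖x‖_p + K^{1/p−1}·‖x‖₁)`. -/
theorem stmt17 (n m K : ℕ) (hK : 0 < K) (p δ : ℝ) (hp1 : 1 < p) (hp2 : p ≤ 2) (hδ : 0 ≤ δ)
    (Φ : Matrix (Fin m) (Fin n) ℝ)
    (hRIP : ∀ y : Fin n → ℝ, (Finset.univ.filter fun i => y i ≠ 0).card ≤ K →
      (∑ i, |y i| ^ p) ^ (1 / p) ≤ (∑ j, |Φ.mulVec y j| ^ p) ^ (1 / p) ∧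
      (∑ j, |Φ.mulVec y j| ^ p) ^ (1 / p) ≤ (1 + δ) * (∑ i, |y i| ^ p) ^ (1 / p)) :
    ∀ x : Fin n → ℝ,
      (∑ j, |Φ.mulVec x j| ^ p) ^ (1 / p) ≤
        (1 + δ) * ((∑ i, |x i| ^ p) ^ (1 / p) + (K : ℝ) ^ (1 / p - 1) * ∑ i, |x i|) := by
  intro x
  have hp0 : (0:ℝ) < p := by linarith
  have hp1' : (1:ℝ) ≤ p := hp1.le
  have hK0 : (0:ℝ) < (K:ℝ) := by exact_mod_cast hK
  rcases Nat.eq_zero_or_pos n with hn | hn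
  · subst hn
    have hΦ : Φ.mulVec x = 0 := by
      funext j; simp [Matrix.mulVec, dotProduct]
    rw [hΦ]
    simp only [Pi.zero_apply, abs_zero, Real.zero_rpow hp0.ne', Finset.sum_const_zero]
    rw [one_div, Real.zero_rpow (inv_ne_zero hp0.ne')]
    positivity
  obtain ⟨N, rfl⟩ : ∃ N, n = N + 1 := ⟨n - 1, (Nat.succ_pred_eq_of_pos hn).symm⟩
  set σ : Equiv.Perm (Fin (N+1)) := Tuple.sort (fun i => -|x i|) with hσ
  set a : Fin (N+1) → ℝ := fun t => |x (σ t)| with ha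
  have ha0 : ∀ t, 0 ≤ a t := fun t => abs_nonneg _
  have hmono : ∀ {s t : Fin (N+1)}, s ≤ t → a t ≤ a s := by
    intro s t hst
    have := Tuple.monotone_sort (fun i => -|x i|) hst
    simpa [ha, hσ] using this
  set y : ℕ → Fin (N+1) → ℝ := fun j i => if ((σ.symm i : Fin (N+1)) : ℕ) / K = j then x i else 0
    with hy
  -- decomposition
  have hx : ∀ i, x i = ∑ j ∈ range (N+1), y j i := by
    intro i
    rw [Finset.sum_ite_eq (range (N+1)) _ (fun _ => x i)]
    have : ((σ.symm i : Fin (N+1)) : ℕ) / K < N + 1 :=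
      lt_of_le_of_lt (Nat.div_le_self _ _) (Fin.is_lt _)
    simp [this]
  -- card of blocks
  have hcard : ∀ j, (univ.filter fun t : Fin (N+1) => (t:ℕ)/K = j).card ≤ K := by
    intro j
    have hsub : (univ.filter fun t : Fin (N+1) => (t:ℕ)/K = j).image Fin.val
        ⊆ Finset.Ico (j*K) (j*K+K) := by
      intro v hv
      simp only [Finset.mem_image, Finset.mem_filter, Finset.mem_univ, true_and] at hv
      obtain ⟨t, ht, rfl⟩ := hv
      rw [Finset.mem_Ico]
      have h1 : j*K ≤ (t:ℕ) := (Nat.le_div_iff_mul_le hK).mp (le_of_eq ht.symm)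
      have h2 : (t:ℕ) < (j+1)*K := (Nat.div_lt_iff_lt_mul hK).mp (by omega)
      have h3 : (j+1)*K = j*K + K := by ring
      omega
    have := Finset.card_le_card hsub
    rw [Finset.card_image_of_injective _ Fin.val_injective, Nat.card_Ico] at this
    omega
  -- sparsity
  have hsupp : ∀ j, (Finset.univ.filter fun i => y j i ≠ 0).card ≤ K := by
    intro j
    refine le_trans (Finset.card_le_card (show _ ⊆
        univ.filter fun i => ((σ.symm i : Fin (N+1)):ℕ)/K = j from ?_)) ?_
    · intro i hi
      simp only [Finset.mem_filter, Finset.mem_univ, true_and] at hi ⊢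
      by_contra h
      exact hi (by simp [hy, h])
    · have himg : (univ.filter fun i => ((σ.symm i : Fin (N+1)):ℕ)/K = j)
          = (univ.filter fun t : Fin (N+1) => (t:ℕ)/K = j).image σ := by
        ext i
        simp only [Finset.mem_filter, Finset.mem_univ, true_and, Finset.mem_image]
        constructor
        · intro h; exact ⟨σ.symm i, h, by simp⟩
        · rintro ⟨t, ht, rfl⟩; simpa using ht
      rw [himg, Finset.card_image_of_injective _ σ.injective]
      exact hcard j
  -- reindexed sums
  have hSp : ∀ j, (∑ i, |y j i| ^ p) =
      ∑ t ∈ univ.filter (fun t : Fin (N+1) => (t:ℕ)/K = j), a t ^ p := by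
    intro j
    rw [← Equiv.sum_comp σ (fun i => |y j i| ^ p), Finset.sum_filter]
    refine Finset.sum_congr rfl fun t _ => ?_
    by_cases h : (t:ℕ)/K = j <;>
      simp [hy, h, ha, Real.zero_rpow hp0.ne']
  have hS1 : ∀ j, (∑ i, |y j i|) =
      ∑ t ∈ univ.filter (fun t : Fin (N+1) => (t:ℕ)/K = j), a t := by
    intro j
    rw [← Equiv.sum_comp σ (fun i => |y j i|), Finset.sum_filter]
    refine Finset.sum_congr rfl fun t _ => ?_
    by_cases h : (t:ℕ)/K = j <;> simp [hy, h, ha, abs_abs]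
  -- key tail bound
  have hkey : ∀ j, ∀ t : Fin (N+1), (t:ℕ)/K = j + 1 →
      (K:ℝ) * a t ≤ ∑ s ∈ univ.filter (fun s : Fin (N+1) => (s:ℕ)/K = j), a s := by
    intro j t ht
    set B := univ.filter (fun s : Fin (N+1) => (s:ℕ)/K = j) with hB
    have htK : (j+1)*K ≤ (t:ℕ) := (Nat.le_div_iff_mul_le hK).mp (le_of_eq ht.symm)
    have hjk : (j+1)*K = j*K + K := by ring
    have hcardB : K ≤ B.card := by
      have hsub : Finset.Ico (j*K) (j*K+K) ⊆ B.image Fin.val := by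
        intro v hv
        rw [Finset.mem_Ico] at hv
        have hvn : v < N + 1 := by have := t.is_lt; omega
        refine Finset.mem_image.mpr ⟨⟨v, hvn⟩, ?_, rfl⟩
        simp only [hB, Finset.mem_filter, Finset.mem_univ, true_and]
        have h1 : j ≤ v / K := (Nat.le_div_iff_mul_le hK).mpr hv.1
        have h2 : v / K < j + 1 := (Nat.div_lt_iff_lt_mul hK).mpr (by omega)
        omega
      have := Finset.card_le_card hsub
      rw [Finset.card_image_of_injective _ Fin.val_injective, Nat.card_Ico] at this
      omega
    have hle : ∀ s ∈ B, a t ≤ a s := by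
      intro s hs
      simp only [hB, Finset.mem_filter, Finset.mem_univ, true_and] at hs
      have hsK : (s:ℕ) < (j+1)*K := (Nat.div_lt_iff_lt_mul hK).mp (by omega)
      exact hmono (by rw [Fin.le_def]; omega)
    calc (K:ℝ) * a t ≤ (B.card : ℝ) * a t := by
          apply mul_le_mul_of_nonneg_right _ (ha0 t); exact_mod_cast hcardB
      _ = ∑ _s ∈ B, a t := by rw [Finset.sum_const, nsmul_eq_mul]
      _ ≤ ∑ s ∈ B, a s := Finset.sum_le_sum hle
  -- block bound
  have hblock : ∀ j, (∑ i, |y (j+1) i| ^ p) ^ (1/p) ≤ (K:ℝ)^(1/p - 1) * ∑ i, |y j i| := by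
    intro j
    rw [hSp, hS1]
    set B1 := univ.filter (fun t : Fin (N+1) => (t:ℕ)/K = j+1) with hB1
    set S := ∑ s ∈ univ.filter (fun s : Fin (N+1) => (s:ℕ)/K = j), a s with hS
    have hS0 : 0 ≤ S := Finset.sum_nonneg fun s _ => ha0 s
    set c : ℝ := S / K with hc
    have hc0 : 0 ≤ c := div_nonneg hS0 hK0.le
    have h1 : ∑ t ∈ B1, a t ^ p ≤ (K:ℝ) * c ^ p := by
      calc ∑ t ∈ B1, a t ^ p ≤ ∑ _t ∈ B1, c ^ p := by
            refine Finset.sum_le_sum fun t ht => ?_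
            have hmem := (Finset.mem_filter.mp ht).2
            have hkt := hkey j t hmem
            have hat : a t ≤ c := by rw [hc, le_div_iff₀ hK0]; linarith
            exact Real.rpow_le_rpow (ha0 t) hat hp0.le
        _ = (B1.card : ℝ) * c ^ p := by rw [Finset.sum_const, nsmul_eq_mul]
        _ ≤ (K:ℝ) * c ^ p := by
            apply mul_le_mul_of_nonneg_right _ (Real.rpow_nonneg hc0 p)
            exact_mod_cast hcard (j+1)
    have h2 : (∑ t ∈ B1, a t ^ p) ^ (1/p) ≤ ((K:ℝ) * c ^ p) ^ (1/p) :=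
      Real.rpow_le_rpow (Finset.sum_nonneg fun t _ => Real.rpow_nonneg (ha0 t) p) h1
        (by positivity)
    refine h2.trans (le_of_eq ?_)
    rw [Real.mul_rpow hK0.le (Real.rpow_nonneg hc0 p), ← Real.rpow_mul hc0,
      mul_one_div_cancel hp0.ne', Real.rpow_one, hc, Real.rpow_sub hK0, Real.rpow_one]
    ring
  -- first block bound
  have hblock0 : (∑ i, |y 0 i| ^ p) ^ (1/p) ≤ (∑ i, |x i| ^ p) ^ (1/p) := by
    refine Real.rpow_le_rpow (Finset.sum_nonneg fun i _ => Real.rpow_nonneg (abs_nonneg _) p)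
      (Finset.sum_le_sum fun i _ => ?_) (by positivity)
    refine Real.rpow_le_rpow (abs_nonneg _) ?_ hp0.le
    simp only [hy]
    split <;> simp [abs_nonneg]
  -- total ℓ1
  have hsum1 : ∑ j ∈ range (N+1), ∑ i, |y j i| = ∑ i, |x i| := by
    rw [Finset.sum_comm]
    refine Finset.sum_congr rfl fun i _ => ?_
    have hmem : ((σ.symm i : Fin (N+1)):ℕ)/K ∈ range (N+1) :=
      Finset.mem_range.mpr (lt_of_le_of_lt (Nat.div_le_self _ _) (Fin.is_lt _))
    calc ∑ j ∈ range (N+1), |y j i|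
        = ∑ j ∈ range (N+1), if ((σ.symm i : Fin (N+1)):ℕ)/K = j then |x i| else 0 := by
          refine Finset.sum_congr rfl fun j _ => ?_
          by_cases h : ((σ.symm i : Fin (N+1)):ℕ)/K = j <;> simp [hy, h]
      _ = |x i| := by rw [Finset.sum_ite_eq]; simp [hmem]
  -- mulVec of sum
  have hΦx : ∀ jj : Fin m, Φ.mulVec x jj = ∑ j ∈ range (N+1), Φ.mulVec (y j) jj := by
    intro jj
    have hxs : x = ∑ j ∈ range (N+1), y j := by
      funext i; rw [hx i]; simp [Finset.sum_apply]
    rw [hxs]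
    simp only [Matrix.mulVec, dotProduct, Finset.sum_apply, Finset.mul_sum]
    exact Finset.sum_comm
  calc (∑ jj, |Φ.mulVec x jj| ^ p) ^ (1/p)
      = (∑ jj, |∑ j ∈ range (N+1), Φ.mulVec (y j) jj| ^ p) ^ (1/p) := by
        congr 1; exact Finset.sum_congr rfl fun jj _ => by rw [hΦx jj]
    _ ≤ ∑ j ∈ range (N+1), (∑ jj, |Φ.mulVec (y j) jj| ^ p) ^ (1/p) :=
        Lp_sum_le hp1' _ _
    _ ≤ ∑ j ∈ range (N+1), (1+δ) * (∑ i, |y j i| ^ p) ^ (1/p) :=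
        Finset.sum_le_sum fun j _ => (hRIP (y j) (hsupp j)).2
    _ = (1+δ) * ∑ j ∈ range (N+1), (∑ i, |y j i| ^ p) ^ (1/p) := by
        rw [Finset.mul_sum]
    _ ≤ (1+δ) * ((∑ i, |x i| ^ p) ^ (1/p) + (K:ℝ)^(1/p-1) * ∑ i, |x i|) := by
        refine mul_le_mul_of_nonneg_left ?_ (by linarith)
        rw [Finset.sum_range_succ']
        have hrest : ∑ j ∈ range N, (∑ i, |y (j+1) i| ^ p) ^ (1/p)
            ≤ (K:ℝ)^(1/p-1) * ∑ i, |x i| := by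
          calc ∑ j ∈ range N, (∑ i, |y (j+1) i| ^ p) ^ (1/p)
              ≤ ∑ j ∈ range N, (K:ℝ)^(1/p-1) * ∑ i, |y j i| :=
                Finset.sum_le_sum fun j _ => hblock j
            _ = (K:ℝ)^(1/p-1) * ∑ j ∈ range N, ∑ i, |y j i| := by rw [Finset.mul_sum]
            _ ≤ (K:ℝ)^(1/p-1) * ∑ j ∈ range (N+1), ∑ i, |y j i| := by
                refine mul_le_mul_of_nonneg_left ?_ (Real.rpow_nonneg hK0.le _)
                rw [Finset.sum_range_succ]
                have : 0 ≤ ∑ i, |y N i| := Finset.sum_nonneg fun i _ => abs_nonneg _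
                linarith
            _ = (K:ℝ)^(1/p-1) * ∑ i, |x i| := by rw [hsum1]
        linarith [hblock0]
end
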